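/- For any hypergraph H and any set A of vertices of H, the Edge-hitter-start game transversal number starting from A satisfies τ_g(H; A) ≤ τ'_g(H; A) + 1, where τ'_g(H; A) is the Staller-start game transversal number starting from A. -/
import Mathlib


open scoped Classical

namespace TransversalGame

/-- A move `v` is legal w.r.t. the selected set `S` in the transversal game on a
hypergraph with edge set `E`: `v` lies in some edge disjoint from `S`. -/
def Legal {V : Type*} (E : Finset (Finset V)) (S : Finset V) (v : V) : Prop :=
  ∃ e ∈ E, v ∈ e ∧ ∀ u ∈ S, u ∉ e

theorem Legal.not_mem {V : Type*} {E : Finset (Finset V)} {S : Finset V} {v : V}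
    (h : Legal E S v) : v ∉ S := by
  rcases h with ⟨e, _, hv, hd⟩
  exact fun hvS => hd v hvS hv

/-- Value of the transversal game from position `S`; `b = true` means Edge-hitter
(the minimizer) to move. The game ends when the selected set is a transversal,
equivalently when no legal move exists. -/
noncomputable def val {V : Type*} [Fintype V] (E : Finset (Finset V)) (b : Bool) (S : Finset V) : ℕ :=
  let L := Finset.univ.filter (fun v => Legal E S v)
  if h : L.Nonempty then
    have hL : L.attach.Nonempty := h.attach
    if b then
      1 + L.attach.inf' hL (fun v => val E false (insert v.1 S))
    else
      1 + L.attach.sup' hL (fun v => val E true (insert v.1 S))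
  else 0
termination_by (Finset.univ \ S).card
decreasing_by
  all_goals {
    have hv : Legal E S v.1 := (Finset.mem_filter.mp v.2).2
    have hvS : v.1 ∉ S := hv.not_mem
    apply Finset.card_lt_card
    constructor
    · intro x hx
      simp only [Finset.mem_sdiff] at hx ⊢
      exact ⟨hx.1, fun hmem => hx.2 (Finset.mem_insert_of_mem hmem)⟩
    · intro hsub
      have hvmem : v.1 ∈ Finset.univ \ S := by simp [hvS]
      have := hsub hvmem
      simp at this
  }

/-- Edge-hitter-start game transversal number starting from `A`. -/
noncomputable def tauG {V : Type*} [Fintype V] (E : Finset (Finset V)) (A : Finset V) : ℕ :=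
  val E true A

/-- Staller-start game transversal number starting from `A`. -/
noncomputable def tauG' {V : Type*} [Fintype V] (E : Finset (Finset V)) (A : Finset V) : ℕ :=
  val E false A

end TransversalGame

set_option linter.unusedSectionVars false

namespace TransversalGame

variable {V : Type*} [Fintype V] (E : Finset (Finset V))

lemma val_of_empty {S : Finset V} {b : Bool}
    (h : ¬ (Finset.univ.filter (fun v => Legal E S v)).Nonempty) : val E b S = 0 := by
  rw [val]; simp [h]

lemma val_true_eq {S : Finset V} (h : (Finset.univ.filter (fun v => Legal E S v)).Nonempty) :
    val E true S = 1 + (Finset.univ.filter (fun v => Legal E S v)).attach.inf' h.attach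
      (fun v => val E false (insert v.1 S)) := by
  rw [val]; simp [h]

lemma val_false_eq {S : Finset V} (h : (Finset.univ.filter (fun v => Legal E S v)).Nonempty) :
    val E false S = 1 + (Finset.univ.filter (fun v => Legal E S v)).attach.sup' h.attach
      (fun v => val E true (insert v.1 S)) := by
  rw [val]; simp [h]

lemma legal_mono {S T : Finset V} (hST : S ⊆ T) {v : V} (h : Legal E T v) : Legal E S v := by
  rcases h with ⟨e, he, hv, hd⟩
  exact ⟨e, he, hv, fun u hu => hd u (hST hu)⟩

lemma legal_insert_iff {S : Finset V} {v : V} (hv : ¬ Legal E S v) (u : V) :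
    Legal E (insert v S) u ↔ Legal E S u := by
  constructor
  · exact legal_mono E (Finset.subset_insert v S)
  · rintro ⟨e, he, hu, hd⟩
    refine ⟨e, he, hu, ?_⟩
    intro x hx
    rcases Finset.mem_insert.mp hx with rfl | hx
    · intro hxe; exact hv ⟨e, he, hxe, hd⟩
    · exact hd x hx

lemma card_lt_of_notMem {S : Finset V} {v : V} (hvS : v ∉ S) :
    (Finset.univ \ insert v S).card < (Finset.univ \ S).card := by
  apply Finset.card_lt_card
  constructor
  · intro x hx
    simp only [Finset.mem_sdiff] at hx ⊢
    exact ⟨hx.1, fun hmem => hx.2 (Finset.mem_insert_of_mem hmem)⟩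
  · intro hsub
    have hvmem : v ∈ Finset.univ \ S := by simp [hvS]
    have := hsub hvmem
    simp at this

lemma sup'_attach_congr {α : Type*} {s t : Finset α} (h : s = t)
    (hs : s.attach.Nonempty) (ht : t.attach.Nonempty) {f g : α → ℕ}
    (hfg : ∀ a ∈ s, f a = g a) :
    s.attach.sup' hs (fun x => f x.1) = t.attach.sup' ht (fun x => g x.1) := by
  subst h
  exact Finset.sup'_congr hs rfl (fun x _ => hfg x.1 x.2)

lemma inf'_attach_congr {α : Type*} {s t : Finset α} (h : s = t)
    (hs : s.attach.Nonempty) (ht : t.attach.Nonempty) {f g : α → ℕ}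
    (hfg : ∀ a ∈ s, f a = g a) :
    s.attach.inf' hs (fun x => f x.1) = t.attach.inf' ht (fun x => g x.1) := by
  subst h
  exact Finset.inf'_congr hs rfl (fun x _ => hfg x.1 x.2)

lemma val_skip : ∀ (n : ℕ) (S : Finset V) (v : V), (Finset.univ \ S).card ≤ n →
    ¬ Legal E S v → ∀ b, val E b (insert v S) = val E b S := by
  intro n
  induction n with
  | zero =>
    intro S v hcard hv b
    by_cases hvS : v ∈ S
    · rw [Finset.insert_eq_self.mpr hvS]
    · exfalso
      have : v ∈ Finset.univ \ S := by simp [hvS]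
      have := Finset.card_pos.mpr ⟨v, this⟩
      omega
  | succ n ih =>
    intro S v hcard hv b
    by_cases hvS : v ∈ S
    · rw [Finset.insert_eq_self.mpr hvS]
    have hfilt : Finset.univ.filter (fun u => Legal E (insert v S) u)
        = Finset.univ.filter (fun u => Legal E S u) := by
      ext u; simp [legal_insert_iff E hv]
    by_cases hS : (Finset.univ.filter (fun u => Legal E S u)).Nonempty
    · have h' : (Finset.univ.filter (fun u => Legal E (insert v S) u)).Nonempty := by
        rw [hfilt]; exact hS
      have key : ∀ u : V, Legal E S u → ∀ b' : Bool,
          val E b' (insert u (insert v S)) = val E b' (insert u S) := by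
        intro u hu b'
        have huS : u ∉ S := hu.not_mem
        rw [Finset.insert_comm]
        refine ih (insert u S) v ?_ ?_ b'
        · have := card_lt_of_notMem (S := S) huS; omega
        · intro hlegal
          exact hv (legal_mono E (Finset.subset_insert u S) hlegal)
      cases b
      · rw [val_false_eq E h', val_false_eq E hS]
        congr 1
        exact sup'_attach_congr hfilt h'.attach hS.attach
          (fun a ha => key a ((legal_insert_iff E hv a).mp (Finset.mem_filter.mp ha).2) true)
      · rw [val_true_eq E h', val_true_eq E hS]
        congr 1
        exact inf'_attach_congr hfilt h'.attach hS.attach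
          (fun a ha => key a ((legal_insert_iff E hv a).mp (Finset.mem_filter.mp ha).2) false)
    · have h' : ¬ (Finset.univ.filter (fun u => Legal E (insert v S) u)).Nonempty := by
        rw [hfilt]; exact hS
      rw [val_of_empty E h', val_of_empty E hS]

lemma empty_case {S : Finset V}
    (hS : ¬ (Finset.univ.filter (fun u => Legal E S u)).Nonempty) :
    (∀ T, S ⊆ T → val E true T ≤ val E true S) ∧
    (∀ T, S ⊆ T → val E false T ≤ val E false S) ∧
    val E true S ≤ val E false S + 1 ∧
    val E false S ≤ val E true S + 1 := by
  have hT0 : ∀ (T : Finset V) (b : Bool), S ⊆ T → val E b T = 0 := by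
    intro T b hST
    apply val_of_empty
    rintro ⟨u, hu⟩
    exact hS ⟨u, Finset.mem_filter.mpr
      ⟨Finset.mem_univ u, legal_mono E hST (Finset.mem_filter.mp hu).2⟩⟩
  refine ⟨fun T h => by rw [hT0 T true h]; exact Nat.zero_le _,
    fun T h => by rw [hT0 T false h]; exact Nat.zero_le _, ?_, ?_⟩ <;>
    simp [val_of_empty E hS]

lemma main_ineq : ∀ (n : ℕ) (S : Finset V), (Finset.univ \ S).card ≤ n →
    (∀ T, S ⊆ T → val E true T ≤ val E true S) ∧
    (∀ T, S ⊆ T → val E false T ≤ val E false S) ∧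
    val E true S ≤ val E false S + 1 ∧
    val E false S ≤ val E true S + 1 := by
  intro n
  induction n with
  | zero =>
    intro S hcard
    apply empty_case
    rintro ⟨u, hu⟩
    have hu' : Legal E S u := (Finset.mem_filter.mp hu).2
    have hmem : u ∈ Finset.univ \ S := by simp [hu'.not_mem]
    have := Finset.card_pos.mpr ⟨u, hmem⟩
    omega
  | succ n ih =>
    intro S hcard
    by_cases hS : (Finset.univ.filter (fun u => Legal E S u)).Nonempty
    swap
    · exact empty_case E hS
    have hmeas : ∀ u : V, u ∉ S → (Finset.univ \ insert u S).card ≤ n := by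
      intro u hu
      have := card_lt_of_notMem (S := S) hu
      omega
    obtain ⟨v, hvmem, hvEq⟩ := Finset.exists_mem_eq_inf' hS.attach
      (fun x : {x // x ∈ Finset.univ.filter (fun u => Legal E S u)} => val E false (insert x.1 S))
    obtain ⟨w, hwmem, hwEq⟩ := Finset.exists_mem_eq_sup' hS.attach
      (fun x : {x // x ∈ Finset.univ.filter (fun u => Legal E S u)} => val E true (insert x.1 S))
    have hvLegal : Legal E S v.1 := (Finset.mem_filter.mp v.2).2
    have hwLegal : Legal E S w.1 := (Finset.mem_filter.mp w.2).2
    have hvS : v.1 ∉ S := hvLegal.not_mem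
    have hwS : w.1 ∉ S := hwLegal.not_mem
    have valS_true : val E true S = 1 + val E false (insert v.1 S) := by
      rw [val_true_eq E hS, hvEq]
    have valS_false : val E false S = 1 + val E true (insert w.1 S) := by
      rw [val_false_eq E hS, hwEq]
    have partA : ∀ T, S ⊆ T → val E true T ≤ val E true S := by
      intro T hST
      by_cases hT : (Finset.univ.filter (fun u => Legal E T u)).Nonempty
      · by_cases hvT : Legal E T v.1
        · have hvT' : v.1 ∈ Finset.univ.filter (fun u => Legal E T u) :=
            Finset.mem_filter.mpr ⟨Finset.mem_univ _, hvT⟩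
          have h1 : val E true T ≤ 1 + val E false (insert v.1 T) := by
            rw [val_true_eq E hT]
            exact Nat.add_le_add_left
              (Finset.inf'_le _ (Finset.mem_attach _ ⟨v.1, hvT'⟩)) 1
          have h2 : val E false (insert v.1 T) ≤ val E false (insert v.1 S) :=
            (ih _ (hmeas v.1 hvS)).2.1 _ (Finset.insert_subset_insert _ hST)
          omega
        · have hskip : val E true (insert v.1 T) = val E true T :=
            val_skip E (Finset.univ \ T).card T v.1 le_rfl hvT true
          have h1 : val E true (insert v.1 T) ≤ val E true (insert v.1 S) :=
            (ih _ (hmeas v.1 hvS)).1 _ (Finset.insert_subset_insert _ hST)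
          have h2 : val E true (insert v.1 S) ≤ val E false (insert v.1 S) + 1 :=
            (ih _ (hmeas v.1 hvS)).2.2.1
          omega
      · rw [val_of_empty E hT]
        exact Nat.zero_le _
    refine ⟨partA, ?_, ?_, ?_⟩
    · -- part B
      intro T hST
      by_cases hT : (Finset.univ.filter (fun u => Legal E T u)).Nonempty
      · obtain ⟨w', hw'mem, hw'Eq⟩ := Finset.exists_mem_eq_sup' hT.attach
          (fun x : {x // x ∈ Finset.univ.filter (fun u => Legal E T u)} => val E true (insert x.1 T))
        have hw'Legal : Legal E S w'.1 :=
          legal_mono E hST (Finset.mem_filter.mp w'.2).2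
        have hw'S : w'.1 ∉ S := hw'Legal.not_mem
        have hw'memS : w'.1 ∈ Finset.univ.filter (fun u => Legal E S u) :=
          Finset.mem_filter.mpr ⟨Finset.mem_univ _, hw'Legal⟩
        have h1 : val E false T = 1 + val E true (insert w'.1 T) := by
          rw [val_false_eq E hT, hw'Eq]
        have h2 : val E true (insert w'.1 T) ≤ val E true (insert w'.1 S) :=
          (ih _ (hmeas w'.1 hw'S)).1 _ (Finset.insert_subset_insert _ hST)
        have h3 : val E false S ≥ 1 + val E true (insert w'.1 S) := by
          rw [val_false_eq E hS]
          exact Nat.add_le_add_left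
            (Finset.le_sup'
              (fun x : {x // x ∈ Finset.univ.filter (fun u => Legal E S u)} =>
                val E true (insert x.1 S))
              (Finset.mem_attach _ ⟨w'.1, hw'memS⟩)) 1
        omega
      · rw [val_of_empty E hT]
        exact Nat.zero_le _
    · -- part C
      have h1 : val E false (insert v.1 S) ≤ val E true (insert v.1 S) + 1 :=
        (ih _ (hmeas v.1 hvS)).2.2.2
      have h2 : val E true (insert v.1 S) ≤ val E true (insert w.1 S) := by
        rw [← hwEq]
        exact Finset.le_sup'
          (fun x : {x // x ∈ Finset.univ.filter (fun u => Legal E S u)} =>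
            val E true (insert x.1 S))
          (Finset.mem_attach _ v)
      omega
    · -- part D
      have key : val E true (insert w.1 S) ≤ 1 + val E false (insert v.1 S) := by
        by_cases hvw : Legal E (insert w.1 S) v.1
        · have hvw' : v.1 ∈ Finset.univ.filter (fun u => Legal E (insert w.1 S) u) :=
            Finset.mem_filter.mpr ⟨Finset.mem_univ _, hvw⟩
          have hW : (Finset.univ.filter (fun u => Legal E (insert w.1 S) u)).Nonempty :=
            ⟨v.1, hvw'⟩
          have h1 : val E true (insert w.1 S) ≤ 1 + val E false (insert v.1 (insert w.1 S)) := by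
            rw [val_true_eq E hW]
            exact Nat.add_le_add_left
              (Finset.inf'_le _ (Finset.mem_attach _ ⟨v.1, hvw'⟩)) 1
          have h2 : val E false (insert v.1 (insert w.1 S)) ≤ val E false (insert v.1 S) :=
            (ih _ (hmeas v.1 hvS)).2.1 _
              (Finset.insert_subset_insert _ (Finset.subset_insert _ _))
          omega
        · have hskip : val E true (insert v.1 (insert w.1 S)) = val E true (insert w.1 S) :=
            val_skip E (Finset.univ \ insert w.1 S).card (insert w.1 S) v.1 le_rfl hvw true
          have h1 : val E true (insert v.1 (insert w.1 S)) ≤ val E true (insert v.1 S) :=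
            (ih _ (hmeas v.1 hvS)).1 _
              (Finset.insert_subset_insert _ (Finset.subset_insert _ _))
          have h2 : val E true (insert v.1 S) ≤ val E false (insert v.1 S) + 1 :=
            (ih _ (hmeas v.1 hvS)).2.2.1
          omega
      omega

end TransversalGame


/-- For any hypergraph (given by its edge set `E`) and any starting set `A`, the
Edge-hitter-start game transversal number from `A` is at most the Staller-start
game transversal number from `A` plus one. -/
theorem tauG_le_tauG'_add_one {V : Type*} [Fintype V] (E : Finset (Finset V))
    (A : Finset V) :
    TransversalGame.tauG E A ≤ TransversalGame.tauG' E A + 1 := by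
  exact (TransversalGame.main_ineq E (Finset.univ \ A).card A le_rfl).2.2.1
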